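/- Let N = n+1 be even with n ≥ 3 and let λ ∈ Λ_N. Then the coefficients c_0 = 0 and c_i = λ_i (1 ≤ i ≤ N) give a nontrivial affine dependence among the points v_0(λ), …, v_N(λ): one has Σ_{i=1}^N λ_i · v_i(λ) = 0 and Σ_{i=1}^N λ_i = 0. Moreover, the points v_0(λ), v_1(λ), …, v_N(λ) affinely span ℝ^n. -/

import Mathlib

open Finset

/-- `eVec n k` is the standard basis vector `e_k` of `ℝ^n` for `1 ≤ k ≤ n`,
with the convention `e_0 = e_{n+1} = 0`. -/
noncomputable def eVec (n : ℕ) (k : ℕ) : Fin n → ℝ := fun t => if (t : ℕ) + 1 = k then 1 else 0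

/-- `dVec n i = e_{i-1} - e_i`. -/
noncomputable def dVec (n : ℕ) (i : ℕ) : Fin n → ℝ := eVec n (i - 1) - eVec n i

/-- `vPt n l i = λ_i (e_{i-1} - e_i)`. -/
noncomputable def vPt (n : ℕ) (l : ℕ → ℝ) (i : ℕ) : Fin n → ℝ := l i • dVec n i

lemma eVec_zero (n : ℕ) : eVec n 0 = 0 := by
  funext t; simp [eVec]

lemma eVec_top (n : ℕ) : eVec n (n + 1) = 0 := by
  funext t; simp [eVec]; omega

theorem stmt2 (n N : ℕ) (hn : 3 ≤ n) (hN : N = n + 1) (hNe : Even N)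
    (l : ℕ → ℝ)
    (hl1 : ∀ i ∈ Finset.Icc 1 N, l i = 1 ∨ l i = -1)
    (hl2 : ∑ i ∈ Finset.Icc 1 N, l i = 0) :
    (∑ i ∈ Finset.Icc 1 N, l i • vPt n l i) = 0 ∧
    (∑ i ∈ Finset.Icc 1 N, l i) = 0 ∧
    affineSpan ℝ (insert (0 : Fin n → ℝ)
        {x | ∃ i ∈ Finset.Icc 1 N, x = vPt n l i}) = ⊤ := by
  have key : ∀ i ∈ Finset.Icc 1 N, l i • vPt n l i = dVec n i := by
    intro i hi
    rcases hl1 i hi with h | h <;> simp [vPt, h, smul_smul]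
  refine ⟨?_, hl2, ?_⟩
  · rw [Finset.sum_congr rfl key]
    have : ∑ i ∈ Finset.Icc 1 N, dVec n i
        = ∑ j ∈ Finset.range N, (eVec n j - eVec n (j + 1)) := by
      rw [show Finset.Icc 1 N = Finset.Ico 1 (N + 1) by rfl, Finset.sum_Ico_eq_sum_range]
      apply Finset.sum_congr (by simp)
      intro j _
      simp [dVec, Nat.add_comm 1 j]
    rw [this, Finset.sum_range_sub' (fun j => eVec n j), hN, eVec_zero, eVec_top, sub_zero]
  · set S : Set (Fin n → ℝ) := insert (0 : Fin n → ℝ)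
        {x | ∃ i ∈ Finset.Icc 1 N, x = vPt n l i} with hS
    have h0 : (0 : Fin n → ℝ) ∈ S := Set.mem_insert _ _
    have hsub : ∀ i ∈ Finset.Icc 1 N, dVec n i ∈ Submodule.span ℝ S := by
      intro i hi
      have hv : vPt n l i ∈ S := Set.mem_insert_of_mem _ ⟨i, hi, rfl⟩
      have := Submodule.smul_mem (Submodule.span ℝ S) (l i) (Submodule.subset_span hv)
      rwa [key i hi] at this
    have he : ∀ k, k ≤ n → eVec n k ∈ Submodule.span ℝ S := by
      intro k
      induction k with
      | zero => intro _; rw [eVec_zero]; exact Submodule.zero_mem _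
      | succ k ih =>
        intro hk
        have hd := hsub (k + 1) (by rw [hN]; simp; omega)
        have h1 := ih (by omega)
        have : eVec n (k + 1) = eVec n k - dVec n (k + 1) := by
          simp [dVec]
        rw [this]
        exact Submodule.sub_mem _ h1 hd
    have hspan : Submodule.span ℝ S = ⊤ := by
      rw [eq_top_iff, ← (Pi.basisFun ℝ (Fin n)).span_eq, Submodule.span_le]
      rintro x ⟨i, rfl⟩
      have : Pi.basisFun ℝ (Fin n) i = eVec n ((i : ℕ) + 1) := by
        funext t
        simp only [eVec, Pi.basisFun_apply, Pi.single_apply]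
        by_cases h : t = i
        · simp [h]
        · have : (t : ℕ) + 1 ≠ (i : ℕ) + 1 := by
            simp [Fin.ext_iff] at h; omega
          simp [h, this]; omega
      rw [this]
      exact he _ (by omega)
    have hvs : vectorSpan ℝ S = ⊤ := by
      rw [eq_top_iff, ← hspan, Submodule.span_le]
      intro v hv
      have : v -ᵥ 0 ∈ vectorSpan ℝ S := vsub_mem_vectorSpan ℝ hv h0
      simpa using this
    rw [AffineSubspace.affineSpan_eq_top_iff_vectorSpan_eq_top_of_nonempty ℝ (Fin n → ℝ) (Fin n → ℝ) ⟨0, h0⟩]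
    exact hvs
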